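/- arXiv:1311.2369 — 2 statements merged into one kernel-verified Lean document; each statement's English description precedes it below -/
import Mathlib

section
/- Let ε > 0 and fix a rectangle 𝓡 = 𝓤 × 𝓜 with μ₁(𝓡) = 0. Let T be a partition, F ⊆ C × D a k-matching, and H, H* ⊆ F two 3-matchings such that both (T,H) and (T,H*) are good. Then |H ∩ H*| ≥ 2. -/
open scoped Classical

namespace MatchingLB

/-- Edges of the complete graph on `n` nodes. -/
abbrev Edge (n : ℕ) := Sym2 (Fin n)

/-- Number of nodes: `n = 3m(k−3) + 2k`. -/
def npar (k m : ℕ) : ℕ := 3 * m * (k - 3) + 2 * k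

/-- Cut size: `t = ((m+1)/2)·(k−3) + 3`. -/
def tpar (k m : ℕ) : ℕ := (m + 1) / 2 * (k - 3) + 3

/-- The cut `δ(U)`: all edges with exactly one endpoint in `U`. -/
def cutSet {n : ℕ} (U : Set (Fin n)) : Set (Edge n) :=
  {e | ∃ a b : Fin n, e = s(a, b) ∧ a ∈ U ∧ b ∉ U}

/-- A matching: a set of non-loop edges that are pairwise vertex disjoint. -/
def IsMatching {n : ℕ} (M : Finset (Edge n)) : Prop :=
  (∀ e ∈ M, ¬ e.IsDiag) ∧
  (∀ e ∈ M, ∀ f ∈ M, e ≠ f → ∀ v : Fin n, v ∈ e → v ∉ f)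

/-- A perfect matching of the complete graph on `n` nodes. -/
def IsPM {n : ℕ} (M : Finset (Edge n)) : Prop :=
  IsMatching M ∧ ∀ v : Fin n, ∃ e ∈ M, v ∈ e

/-- `Q_ℓ`: pairs `(U, M)` of a `t`-node cut and a perfect matching with `|δ(U) ∩ M| = ℓ`. -/
def Qset (n t ℓ : ℕ) : Set (Finset (Fin n) × Finset (Edge n)) :=
  {p | p.1.card = t ∧ IsPM p.2 ∧
    ((p.2 : Set (Edge n)) ∩ cutSet (p.1 : Set (Fin n))).ncard = ℓ}

/-- The uniform measure `μ_ℓ(𝓡) = |𝓡 ∩ Q_ℓ| / |Q_ℓ|` of a set of pairs on `Q_ℓ`. -/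
noncomputable def mu (n t ℓ : ℕ) (R : Set (Finset (Fin n) × Finset (Edge n))) : ℝ :=
  ((R ∩ Qset n t ℓ).ncard : ℝ) / ((Qset n t ℓ).ncard : ℝ)

/-- Labels of the blocks of a partition `T = (A₁,…,A_m, C, D, B₁,…,B_m)`. -/
inductive Lbl (m : ℕ) where
  | A (i : Fin m)
  | C
  | D
  | B (i : Fin m)
  deriving DecidableEq, Fintype

/-- A partition of the `n` nodes into blocks `A₁,…,A_m` of `k−3` nodes each, core sets `C` and
`D` of `k` nodes each, and blocks `B₁,…,B_m` of `2(k−3)` nodes each, encoded as a labelling. -/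
def IsPartition (n k m : ℕ) (f : Fin n → Lbl m) : Prop :=
  (∀ i, {v | f v = Lbl.A i}.ncard = k - 3) ∧
  ({v | f v = Lbl.C}.ncard = k) ∧
  ({v | f v = Lbl.D}.ncard = k) ∧
  (∀ i, {v | f v = Lbl.B i}.ncard = 2 * (k - 3))

def Cset {n m : ℕ} (f : Fin n → Lbl m) : Set (Fin n) := {v | f v = Lbl.C}

def Aset {n m : ℕ} (f : Fin n → Lbl m) (i : Fin m) : Set (Fin n) := {v | f v = Lbl.A i}

/-- A node lies in `C ∪ D`. -/
def inCD {n m : ℕ} (f : Fin n → Lbl m) (v : Fin n) : Prop := f v = Lbl.C ∨ f v = Lbl.D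

/-- `e ∈ E(T)`: the edge runs inside some `A_i`, inside `C ∪ D`, or inside some `B_i`. -/
def allowedEdge {n m : ℕ} (f : Fin n → Lbl m) (e : Edge n) : Prop :=
  ∃ a b : Fin n, e = s(a, b) ∧
    ((∃ i, f a = Lbl.A i ∧ f b = Lbl.A i) ∨ (inCD f a ∧ inCD f b) ∨
      (∃ i, f a = Lbl.B i ∧ f b = Lbl.B i))

/-- `e ∈ C × D`: the edge runs between `C` and `D`. -/
def betweenCD {n m : ℕ} (f : Fin n → Lbl m) (e : Edge n) : Prop :=
  ∃ a b : Fin n, e = s(a, b) ∧ f a = Lbl.C ∧ f b = Lbl.D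

/-- `e ∈ E(C ∪ D)`: the edge runs inside `C ∪ D`. -/
def insideCD {n m : ℕ} (f : Fin n → Lbl m) (e : Edge n) : Prop :=
  ∃ a b : Fin n, e = s(a, b) ∧ inCD f a ∧ inCD f b

/-- `𝓜_all(T)`: the perfect matchings respecting the partition. -/
def MallT {n m : ℕ} (f : Fin n → Lbl m) : Set (Finset (Edge n)) :=
  {M | IsPM M ∧ ∀ e ∈ M, allowedEdge f e}

/-- `𝓤_all(T)`: the `t`-node cuts `U ⊆ A ∪ C` containing all or none of the nodes of each
block `A_i`. -/
def UallT {n m : ℕ} (t : ℕ) (f : Fin n → Lbl m) : Set (Finset (Fin n)) :=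
  {U | U.card = t ∧ (∀ v ∈ U, (∃ i, f v = Lbl.A i) ∨ f v = Lbl.C) ∧
    ∀ i, Disjoint (U : Set (Fin n)) (Aset f i) ∨ Aset f i ⊆ (U : Set (Fin n))}

/-- `V(H)`: the nodes incident to the edges of `H`. -/
def VSet {n : ℕ} (H : Finset (Edge n)) : Set (Fin n) := {v | ∃ e ∈ H, v ∈ e}

/-- `p_{M,T}(H)`: the probability that a uniformly random `M ∈ 𝓜_all(T)` with `H ⊆ M`
lies in `𝓜`. -/
noncomputable def pM {n m : ℕ} (f : Fin n → Lbl m) (Mm : Set (Finset (Edge n)))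
    (H : Finset (Edge n)) : ℝ :=
  ({M | M ∈ MallT f ∧ H ⊆ M ∧ M ∈ Mm}.ncard : ℝ) /
    ({M | M ∈ MallT f ∧ H ⊆ M}.ncard : ℝ)

/-- `p^ex_{M,T}(H)`: the probability that a uniformly random `M ∈ 𝓜_all(T)` with
`M ∩ δ(C) = H` lies in `𝓜`. -/
noncomputable def pMex {n m : ℕ} (f : Fin n → Lbl m) (Mm : Set (Finset (Edge n)))
    (H : Finset (Edge n)) : ℝ :=
  ({M | M ∈ MallT f ∧ M.filter (· ∈ cutSet (Cset f)) = H ∧ M ∈ Mm}.ncard : ℝ) /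
    ({M | M ∈ MallT f ∧ M.filter (· ∈ cutSet (Cset f)) = H}.ncard : ℝ)

/-- `p_{U,T}(c)`: the probability that a uniformly random `U ∈ 𝓤_all(T)` with `c ⊆ U`
lies in `𝓤`. -/
noncomputable def pU {n m : ℕ} (t : ℕ) (f : Fin n → Lbl m) (Uu : Set (Finset (Fin n)))
    (c : Set (Fin n)) : ℝ :=
  ({U | U ∈ UallT t f ∧ c ⊆ (U : Set (Fin n)) ∧ U ∈ Uu}.ncard : ℝ) /
    ({U | U ∈ UallT t f ∧ c ⊆ (U : Set (Fin n))}.ncard : ℝ)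

/-- `p^ex_{U,T}(c)`: the probability that a uniformly random `U ∈ 𝓤_all(T)` with `U ∩ C = c`
lies in `𝓤`. -/
noncomputable def pUexSet {n m : ℕ} (t : ℕ) (f : Fin n → Lbl m) (Uu : Set (Finset (Fin n)))
    (c : Set (Fin n)) : ℝ :=
  ({U | U ∈ UallT t f ∧ (U : Set (Fin n)) ∩ Cset f = c ∧ U ∈ Uu}.ncard : ℝ) /
    ({U | U ∈ UallT t f ∧ (U : Set (Fin n)) ∩ Cset f = c}.ncard : ℝ)

/-- `p^ex_{U,T}(H) := p^ex_{U,T}(V(H) ∩ C)` for a matching `H ⊆ C × D`. -/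
noncomputable def pUexH {n m : ℕ} (t : ℕ) (f : Fin n → Lbl m) (Uu : Set (Finset (Fin n)))
    (H : Finset (Edge n)) : ℝ :=
  pUexSet t f Uu (VSet H ∩ Cset f)

/-- `H` is an `ℓ`-matching in the complete bipartite graph between `C` and `D`. -/
def IsCDMatching {n m : ℕ} (f : Fin n → Lbl m) (ℓ : ℕ) (H : Finset (Edge n)) : Prop :=
  IsMatching H ∧ H.card = ℓ ∧ ∀ e ∈ H, betweenCD f e

/-- `(T,H)` is `M`-good: `0 < (1/(1+ε))·p_{M,T}(H)` and every `k`-matching `F` with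
`H ⊆ F ⊆ E(C ∪ D)` satisfies `(1/(1+ε))·p_{M,T}(H) ≤ p_{M,T}(F) ≤ (1+ε)·p_{M,T}(H)`. -/
def MGood {n m : ℕ} (ε : ℝ) (k : ℕ) (f : Fin n → Lbl m) (Mm : Set (Finset (Edge n)))
    (H : Finset (Edge n)) : Prop :=
  0 < (1 / (1 + ε)) * pM f Mm H ∧
  ∀ F : Finset (Edge n), IsMatching F → F.card = k → H ⊆ F → (∀ e ∈ F, insideCD f e) →
    (1 / (1 + ε)) * pM f Mm H ≤ pM f Mm F ∧ pM f Mm F ≤ (1 + ε) * pM f Mm H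

/-- `(T,H)` is `U`-good:
`0 < (1/(1+ε))·p^ex_{U,T}(H) ≤ p^ex_{U,T}(C) ≤ (1+ε)·p^ex_{U,T}(H)`. -/
def UGood {n m : ℕ} (ε : ℝ) (t : ℕ) (f : Fin n → Lbl m) (Uu : Set (Finset (Fin n)))
    (H : Finset (Edge n)) : Prop :=
  0 < (1 / (1 + ε)) * pUexH t f Uu H ∧
  (1 / (1 + ε)) * pUexH t f Uu H ≤ pUexSet t f Uu (Cset f) ∧
  pUexSet t f Uu (Cset f) ≤ (1 + ε) * pUexH t f Uu H

/-- `(T,H)` is good: both `M`-good and `U`-good. -/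
def Good {n m : ℕ} (ε : ℝ) (k t : ℕ) (f : Fin n → Lbl m)
    (Mm : Set (Finset (Edge n))) (Uu : Set (Finset (Fin n))) (H : Finset (Edge n)) : Prop :=
  MGood ε k f Mm H ∧ UGood ε t f Uu H

/-- `(T,H)` is small: `p^ex_{M,T}(H) ≤ 2^{−δm}` or `p^ex_{U,T}(H) ≤ 2^{−δm}`. -/
def Small {n m : ℕ} (δ : ℝ) (t : ℕ) (f : Fin n → Lbl m)
    (Mm : Set (Finset (Edge n))) (Uu : Set (Finset (Fin n))) (H : Finset (Edge n)) : Prop :=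
  pMex f Mm H ≤ (2 : ℝ) ^ (-(δ * (m : ℝ))) ∨ pUexH t f Uu H ≤ (2 : ℝ) ^ (-(δ * (m : ℝ)))

/-- `(T,H)` is bad: neither good nor small. -/
def Bad {n m : ℕ} (ε δ : ℝ) (k t : ℕ) (f : Fin n → Lbl m)
    (Mm : Set (Finset (Edge n))) (Uu : Set (Finset (Fin n))) (H : Finset (Edge n)) : Prop :=
  ¬ Good ε k t f Mm Uu H ∧ ¬ Small δ t f Mm Uu H

/-- `(T,H)` is `U`-bad: neither `U`-good nor small. -/
def UBad {n m : ℕ} (ε δ : ℝ) (t : ℕ) (f : Fin n → Lbl m)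
    (Mm : Set (Finset (Edge n))) (Uu : Set (Finset (Fin n))) (H : Finset (Edge n)) : Prop :=
  ¬ UGood ε t f Uu H ∧ ¬ Small δ t f Mm Uu H

/-- `𝒫(U,M)`: the partitions `T` compatible with the pair `(U, M)`, i.e. `U ∈ 𝓤_all(T)` with
`U ∩ C = V(H) ∩ C` and `M ∈ 𝓜_all(T)` with `M ∩ (C × D) = H`, where `H = δ(U) ∩ M`. -/
def PSet (n k m t : ℕ) (U : Finset (Fin n)) (M H : Finset (Edge n)) :
    Set (Fin n → Lbl m) :=
  {f | IsPartition n k m f ∧ U ∈ UallT t f ∧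
    (U : Set (Fin n)) ∩ Cset f = VSet H ∩ Cset f ∧
    M ∈ MallT f ∧ M.filter (betweenCD f) = H}

/-- Expectation of `g` over a uniformly random partition `T`. -/
noncomputable def expPart (n k m : ℕ) (g : (Fin n → Lbl m) → ℝ) : ℝ :=
  (∑ f ∈ Finset.univ.filter (fun f => IsPartition n k m f), g f) /
    ((Finset.univ.filter (fun f => IsPartition n k m f)).card : ℝ)

/-- Expectation of `g` over a uniformly random 3-matching `H` in the complete bipartite graph
between `C` and `D`. -/
noncomputable def expH3 {n m : ℕ} (f : Fin n → Lbl m) (g : Finset (Edge n) → ℝ) : ℝ :=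
  (∑ H ∈ Finset.univ.filter (fun H => IsCDMatching f 3 H), g H) /
    ((Finset.univ.filter (fun H => IsCDMatching f 3 H)).card : ℝ)


lemma edge_exists_rep {n : ℕ} (e : Edge n) : ∃ a b : Fin n, e = s(a,b) := by
  induction e using Sym2.ind with
  | _ a b => exact ⟨a, b, rfl⟩

lemma isMatching_subset {n : ℕ} {F H : Finset (Edge n)} (hF : IsMatching F) (h : H ⊆ F) :
    IsMatching H :=
  ⟨fun e he => hF.1 e (h he), fun e he g hg hne v hv => hF.2 e (h he) g (h hg) hne v hv⟩

lemma isMatching_union {n : ℕ} {P Q : Finset (Edge n)} (hP : IsMatching P) (hQ : IsMatching Q)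
    (hd : ∀ e ∈ P, ∀ g ∈ Q, ∀ v : Fin n, v ∈ e → v ∉ g) : IsMatching (P ∪ Q) := by
  constructor
  · intro e he; rcases Finset.mem_union.mp he with he | he
    · exact hP.1 e he
    · exact hQ.1 e he
  · intro e he g hg hne v hv
    rcases Finset.mem_union.mp he with he | he <;> rcases Finset.mem_union.mp hg with hg | hg
    · exact hP.2 e he g hg hne v hv
    · exact hd e he g hg v hv
    · intro hvg; exact hd g hg e he v hvg hv
    · exact hQ.2 e he g hg hne v hv

lemma disjoint_of_vertex_disjoint {n : ℕ} {P Q : Finset (Edge n)}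
    (hd : ∀ e ∈ P, ∀ g ∈ Q, ∀ v : Fin n, v ∈ e → v ∉ g) : Disjoint P Q := by
  rw [Finset.disjoint_left]
  intro e heP heQ
  obtain ⟨a, b, rfl⟩ := edge_exists_rep e
  exact hd _ heP _ heQ a (Sym2.mem_mk_left a b) (Sym2.mem_mk_left a b)

lemma isMatching_singleton {n : ℕ} {a b : Fin n} (h : a ≠ b) :
    IsMatching ({s(a,b)} : Finset (Edge n)) := by
  constructor
  · intro e he; rw [Finset.mem_singleton] at he; subst he; simpa [Sym2.mk_isDiag_iff] using h
  · intro e he g hg hne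
    rw [Finset.mem_singleton] at he hg; subst he; subst hg; exact absurd rfl hne

lemma exists_pm_on {n : ℕ} : ∀ (s : Finset (Fin n)), Even s.card →
    ∃ P : Finset (Edge n), IsMatching P ∧ 2 * P.card = s.card ∧
      (∀ e ∈ P, ∀ v : Fin n, v ∈ e → v ∈ s) ∧ (∀ v ∈ s, ∃ e ∈ P, v ∈ e) := by
  intro s
  induction s using Finset.strongInduction with
  | _ s ih =>
    intro hev
    rcases s.eq_empty_or_nonempty with rfl | ⟨a, ha⟩
    · exact ⟨∅, ⟨by simp, by simp⟩, by simp, by simp, by simp⟩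
    · have h1 : 1 ≤ s.card := Finset.card_pos.mpr ⟨a, ha⟩
      have h2 : 2 ≤ s.card := by rcases hev with ⟨j, hj⟩; omega
      have hbne : (s.erase a).Nonempty := by
        rw [← Finset.card_pos, Finset.card_erase_of_mem ha]; omega
      obtain ⟨b, hb⟩ := hbne
      have hba : b ≠ a := Finset.ne_of_mem_erase hb
      have hbs : b ∈ s := Finset.mem_of_mem_erase hb
      have hsub : (s.erase a).erase b ⊂ s :=
        (Finset.erase_subset _ _).trans_ssubset (Finset.erase_ssubset ha)
      have hcard' : ((s.erase a).erase b).card = s.card - 2 := by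
        rw [Finset.card_erase_of_mem hb, Finset.card_erase_of_mem ha]; omega
      have hev' : Even ((s.erase a).erase b).card := by
        rcases hev with ⟨j, hj⟩; exact ⟨j - 1, by omega⟩
      obtain ⟨P, hPm, hPc, hPin, hPcov⟩ := ih _ hsub hev'
      have hvP : ∀ e ∈ P, ∀ v : Fin n, v ∈ e → v ≠ a ∧ v ≠ b := by
        intro e he v hv
        have hv' := hPin e he v hv
        rw [Finset.mem_erase, Finset.mem_erase] at hv'
        exact ⟨hv'.2.1, hv'.1⟩
      have hnotin : s(a,b) ∉ P := by
        intro hmem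
        exact (hvP _ hmem a (Sym2.mem_mk_left a b)).1 rfl
      refine ⟨insert s(a,b) P, ?_, ?_, ?_, ?_⟩
      · constructor
        · intro e he
          rcases Finset.mem_insert.mp he with rfl | he
          · simpa [Sym2.mk_isDiag_iff] using hba.symm
          · exact hPm.1 e he
        · intro e he g hg hne v hv
          rcases Finset.mem_insert.mp he with rfl | he <;>
            rcases Finset.mem_insert.mp hg with rfl | hg
          · exact absurd rfl hne
          · intro hvg
            rcases Sym2.mem_iff.mp hv with h' | h'
            · exact (hvP g hg v hvg).1 h'
            · exact (hvP g hg v hvg).2 h'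
          · intro hvg
            rcases Sym2.mem_iff.mp hvg with h' | h'
            · exact (hvP e he _ hv).1 h'
            · exact (hvP e he _ hv).2 h'
          · exact hPm.2 e he g hg hne v hv
      · rw [Finset.card_insert_of_notMem hnotin]; omega
      · intro e he v hv
        rcases Finset.mem_insert.mp he with rfl | he
        · rcases Sym2.mem_iff.mp hv with rfl | rfl
          · exact ha
          · exact hbs
        · have hv' := hPin e he v hv
          exact Finset.mem_of_mem_erase (Finset.mem_of_mem_erase hv')
      · intro v hv
        by_cases hva : v = a
        · exact ⟨s(a,b), Finset.mem_insert_self _ _, by rw [hva]; exact Sym2.mem_mk_left a b⟩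
        by_cases hvb : v = b
        · exact ⟨s(a,b), Finset.mem_insert_self _ _, by rw [hvb]; exact Sym2.mem_mk_right a b⟩
        · obtain ⟨e, he, hve⟩ := hPcov v (by
            rw [Finset.mem_erase, Finset.mem_erase]; exact ⟨hvb, hva, hv⟩)
          exact ⟨e, Finset.mem_insert_of_mem he, hve⟩

lemma nonempty_of_ratio_pos {α : Type*} {S T : Set α} (h : 0 < (S.ncard : ℝ) / (T.ncard : ℝ)) :
    S.Nonempty := by
  apply Set.nonempty_of_ncard_ne_zero
  intro h0
  rw [h0] at h
  simp at h



lemma card_endpoints {n m : ℕ} {f : Fin n → Lbl m} {F H : Finset (Edge n)}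
    (hFm : IsMatching F) (hH : H ⊆ F) (L : Lbl m)
    (huniq : ∀ e ∈ H, ∃ a b : Fin n, e = s(a,b) ∧ f a = L ∧ f b ≠ L) :
    (Finset.univ.filter (fun v => (∃ e ∈ H, v ∈ e) ∧ f v = L)).card = H.card := by
  have hrw : Finset.univ.filter (fun v : Fin n => (∃ e ∈ H, v ∈ e) ∧ f v = L)
      = H.biUnion (fun e => Finset.univ.filter (fun v => v ∈ e ∧ f v = L)) := by
    ext v
    simp only [Finset.mem_filter, Finset.mem_biUnion, Finset.mem_univ, true_and]
    tauto
  rw [hrw, Finset.card_biUnion]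
  · have hone : ∀ e ∈ H, (Finset.univ.filter (fun v => v ∈ e ∧ f v = L)).card = 1 := by
      intro e he
      obtain ⟨a, b, rfl, haL, hbL⟩ := huniq e he
      have hset : Finset.univ.filter (fun v => v ∈ s(a,b) ∧ f v = L) = {a} := by
        ext v
        simp only [Finset.mem_filter, Finset.mem_univ, true_and, Finset.mem_singleton,
          Sym2.mem_iff]
        constructor
        · rintro ⟨rfl | rfl, hL⟩
          · rfl
          · exact absurd hL hbL
        · rintro rfl; exact ⟨Or.inl rfl, haL⟩
      rw [hset, Finset.card_singleton]
    rw [Finset.sum_congr rfl hone, Finset.sum_const, smul_eq_mul, mul_one]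
  · intro e he e' he' hne
    simp only [Function.onFun]; rw [Finset.disjoint_left]
    intro v hv hv'
    rw [Finset.mem_filter] at hv hv'
    exact hFm.2 e (hH he) e' (hH he') hne v hv.2.1 hv'.2.1

/-- For a rectangle `𝓡 = 𝓤 × 𝓜` with `μ₁(𝓡) = 0`: if `H, H* ⊆ F` are two 3-matchings inside a
`k`-matching `F ⊆ C × D` such that both `(T,H)` and `(T,H*)` are good, then `|H ∩ H*| ≥ 2`. -/
theorem good_3subsets_overlap (k m : ℕ) (hk : Odd k) (hk3 : 3 ≤ k) (hm : Odd m)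
    (ε : ℝ) (hε : 0 < ε)
    (Uu : Set (Finset (Fin (npar k m)))) (Mm : Set (Finset (Edge (npar k m))))
    (hUu : ∀ U ∈ Uu, U.card = tpar k m) (hMm : ∀ M ∈ Mm, IsPM M)
    (hmu1 : mu (npar k m) (tpar k m) 1 (Uu ×ˢ Mm) = 0)
    (f : Fin (npar k m) → Lbl m) (hf : IsPartition (npar k m) k m f)
    (F : Finset (Edge (npar k m))) (hF : IsCDMatching f k F)
    (H Hs : Finset (Edge (npar k m)))
    (hHF : H ⊆ F) (hH3 : H.card = 3) (hHsF : Hs ⊆ F) (hHs3 : Hs.card = 3)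
    (hgoodH : Good ε k (tpar k m) f Mm Uu H)
    (hgoodHs : Good ε k (tpar k m) f Mm Uu Hs) :
    2 ≤ (H ∩ Hs).card := by
  classical
  by_contra hcon
  push_neg at hcon
  have hover : (H ∩ Hs).card ≤ 1 := by omega
  obtain ⟨hFm, hFcard, hFcd⟩ := hF
  rcases Nat.lt_or_ge k 4 with hk4 | hk4
  · -- k = 3 : H = F = Hs
    have hk3' : k = 3 := by omega
    have hHF' : H = F := Finset.eq_of_subset_of_card_le hHF (by omega)
    have hHsF' : Hs = F := Finset.eq_of_subset_of_card_le hHsF (by omega)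
    rw [hHF', hHsF', Finset.inter_self] at hcon
    omega
  have hk5 : 5 ≤ k := by rcases hk with ⟨j, hj⟩; omega
  have h1ε : (0:ℝ) < 1 / (1 + ε) := by positivity
  -- extract a cut U from the U-goodness of H
  have hpU : 0 < pUexH (tpar k m) f Uu H := by
    by_contra hle
    push_neg at hle
    have : 1 / (1 + ε) * pUexH (tpar k m) f Uu H ≤ 0 :=
      mul_nonpos_of_nonneg_of_nonpos h1ε.le hle
    linarith [hgoodH.2.1]
  obtain ⟨U, hUall, hUC, hUmem⟩ :
      {U | U ∈ UallT (tpar k m) f ∧ (↑U : Set (Fin (npar k m))) ∩ Cset f = VSet H ∩ Cset f ∧ U ∈ Uu}.Nonempty := by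
    unfold pUexH pUexSet at hpU
    exact nonempty_of_ratio_pos hpU
  obtain ⟨hUcard, hUlab, hUA⟩ := hUall
  -- basic finsets
  set Cfin := Finset.univ.filter (fun v : Fin (npar k m) => f v = Lbl.C) with hCfin
  set Dfin := Finset.univ.filter (fun v : Fin (npar k m) => f v = Lbl.D) with hDfin
  have hCcard : Cfin.card = k := by
    have h := hf.2.1
    rwa [show {v : Fin (npar k m) | f v = Lbl.C} = ↑Cfin by ext v; simp [hCfin],
      Set.ncard_coe_finset] at h
  have hDcard : Dfin.card = k := by
    have h := hf.2.2.1
    rwa [show {v : Fin (npar k m) | f v = Lbl.D} = ↑Dfin by ext v; simp [hDfin],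
      Set.ncard_coe_finset] at h
  set S := Finset.univ.filter (fun v : Fin (npar k m) => (∃ e ∈ H, v ∈ e) ∧ f v = Lbl.C) with hSdef
  set X := Finset.univ.filter (fun v : Fin (npar k m) => (∃ e ∈ Hs, v ∈ e) ∧ f v = Lbl.C) with hXdef
  set XD := Finset.univ.filter (fun v : Fin (npar k m) => (∃ e ∈ Hs, v ∈ e) ∧ f v = Lbl.D) with hXDdef
  have hScard : S.card = 3 := by
    rw [hSdef, card_endpoints hFm hHF Lbl.C ?_, hH3]
    intro e he
    obtain ⟨a, b, heq, ha, hb⟩ := hFcd e (hHF he)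
    exact ⟨a, b, heq, ha, by simp [hb]⟩
  have hXcard : X.card = 3 := by
    rw [hXdef, card_endpoints hFm hHsF Lbl.C ?_, hHs3]
    intro e he
    obtain ⟨a, b, heq, ha, hb⟩ := hFcd e (hHsF he)
    exact ⟨a, b, heq, ha, by simp [hb]⟩
  have hXDcard : XD.card = 3 := by
    rw [hXDdef, card_endpoints hFm hHsF Lbl.D ?_, hHs3]
    intro e he
    obtain ⟨a, b, heq, ha, hb⟩ := hFcd e (hHsF he)
    exact ⟨b, a, by rw [heq, Sym2.eq_swap], hb, by simp [ha]⟩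
  have hSsubC : ∀ v ∈ S, f v = Lbl.C := by
    intro v hv; rw [hSdef, Finset.mem_filter] at hv; exact hv.2.2
  have hXsubC : ∀ v ∈ X, f v = Lbl.C := by
    intro v hv; rw [hXdef, Finset.mem_filter] at hv; exact hv.2.2
  have hDnotS : ∀ v : Fin (npar k m), f v = Lbl.D → v ∉ S := by
    intro v hv hvS
    rw [hSsubC v hvS] at hv
    simp at hv
  -- membership in U for C-nodes is membership in S
  have hUchar : ∀ v : Fin (npar k m), f v = Lbl.C → (v ∈ U ↔ v ∈ S) := by
    intro v hvC
    have hmem := Set.ext_iff.mp hUC v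
    simp only [Set.mem_inter_iff, Finset.mem_coe, VSet, Cset, Set.mem_setOf_eq] at hmem
    rw [hSdef]
    simp only [Finset.mem_filter, Finset.mem_univ, true_and]
    constructor
    · intro hvU; exact ⟨(hmem.mp ⟨hvU, hvC⟩).1, hvC⟩
    · rintro ⟨hex, -⟩; exact (hmem.mpr ⟨hex, hvC⟩).1
  have hUD : ∀ v : Fin (npar k m), f v = Lbl.D → v ∉ U := by
    intro v hv hvU
    rcases hUlab v hvU with ⟨i, hi⟩ | hC
    · rw [hv] at hi; simp at hi
    · rw [hv] at hC; simp at hC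
  have hSU : ∀ v ∈ S, v ∈ U := fun v hv => (hUchar v (hSsubC v hv)).mpr hv
  have hUcharCD : ∀ v : Fin (npar k m), inCD f v → (v ∈ U ↔ v ∈ S) := by
    intro v hv
    rcases hv with hC | hD
    · exact hUchar v hC
    · exact iff_of_false (hUD v hD) (hDnotS v hD)
  -- the overlap of S and X has at most one element
  set W := S ∩ X with hWdef
  have hWcard : W.card ≤ 1 := by
    have key : W.card ≤ (H ∩ Hs).card := by
      apply Finset.card_le_card_of_injOn
        (fun v => if h : ∃ e ∈ H, v ∈ e then h.choose else s(v, v))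
      · intro v hv
        have hvS : v ∈ S := Finset.mem_of_mem_inter_left hv
        have hvX : v ∈ X := Finset.mem_of_mem_inter_right hv
        rw [hSdef, Finset.mem_filter] at hvS
        rw [hXdef, Finset.mem_filter] at hvX
        have hex : ∃ e ∈ H, v ∈ e := hvS.2.1
        simp only [Finset.mem_coe, dif_pos hex]
        have heH : hex.choose ∈ H := hex.choose_spec.1
        have hve : v ∈ hex.choose := hex.choose_spec.2
        obtain ⟨e', he'Hs, hve'⟩ := hvX.2.1
        have heq : hex.choose = e' := by
          by_contra hne
          exact hFm.2 _ (hHF heH) _ (hHsF he'Hs) hne v hve hve'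
        rw [Finset.mem_inter]
        exact ⟨heH, heq ▸ he'Hs⟩
      · intro v₁ hv₁ v₂ hv₂ heq
        rw [hWdef, Finset.coe_inter, Set.mem_inter_iff, Finset.mem_coe, Finset.mem_coe]
          at hv₁ hv₂
        have h₁C : f v₁ = Lbl.C := hSsubC v₁ hv₁.1
        have h₂C : f v₂ = Lbl.C := hSsubC v₂ hv₂.1
        have hex₁ : ∃ e ∈ H, v₁ ∈ e := by
          have := hv₁.1; rw [hSdef, Finset.mem_filter] at this; exact this.2.1
        have hex₂ : ∃ e ∈ H, v₂ ∈ e := by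
          have := hv₂.1; rw [hSdef, Finset.mem_filter] at this; exact this.2.1
        dsimp only at heq
        rw [dif_pos hex₁, dif_pos hex₂] at heq
        obtain ⟨a, b, heab, ha, hb⟩ := hFcd _ (hHF hex₁.choose_spec.1)
        have hv₁e := hex₁.choose_spec.2
        have hv₂e := hex₂.choose_spec.2
        rw [← heq] at hv₂e
        rw [heab, Sym2.mem_iff] at hv₁e hv₂e
        have h₁ : v₁ = a := by
          rcases hv₁e with h | h
          · exact h
          · rw [h, hb] at h₁C; simp at h₁C
        have h₂ : v₂ = a := by
          rcases hv₂e with h | h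
          · exact h
          · rw [h, hb] at h₂C; simp at h₂C
        rw [h₁, h₂]
    omega
  -- the leftover C and D nodes
  set R := Cfin \ X with hRdef
  set DR := Dfin \ XD with hDRdef
  have hXsubCfin : X ⊆ Cfin := by
    intro v hv
    rw [hCfin, Finset.mem_filter]
    exact ⟨Finset.mem_univ v, hXsubC v hv⟩
  have hSsubCfin : S ⊆ Cfin := by
    intro v hv
    rw [hCfin, Finset.mem_filter]
    exact ⟨Finset.mem_univ v, hSsubC v hv⟩
  have hXDsubDfin : XD ⊆ Dfin := by
    intro v hv
    rw [hXDdef, Finset.mem_filter] at hv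
    rw [hDfin, Finset.mem_filter]
    exact ⟨Finset.mem_univ v, hv.2.2⟩
  have hRcard : R.card = k - 3 := by
    rw [hRdef, Finset.card_sdiff_of_subset hXsubCfin, hXcard, hCcard]
  have hDRcard : DR.card = k - 3 := by
    rw [hDRdef, Finset.card_sdiff_of_subset hXDsubDfin, hXDcard, hDcard]
  have hevk : Even (k - 3) := by
    rcases hk with ⟨j, hj⟩; exact ⟨j - 1, by omega⟩
  have hRC : ∀ v ∈ R, f v = Lbl.C := by
    intro v hv
    rw [hRdef, Finset.mem_sdiff, hCfin, Finset.mem_filter] at hv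
    exact hv.1.2
  have hDRD : ∀ v ∈ DR, f v = Lbl.D := by
    intro v hv
    rw [hDRdef, Finset.mem_sdiff, hDfin, Finset.mem_filter] at hv
    exact hv.1.2
  have hRnotHs : ∀ v ∈ R, ∀ e ∈ Hs, v ∉ e := by
    intro v hv e he hve
    rw [hRdef, Finset.mem_sdiff] at hv
    exact hv.2 (by
      rw [hXdef, Finset.mem_filter]
      exact ⟨Finset.mem_univ v, ⟨e, he, hve⟩, hRC v (by rw [hRdef, Finset.mem_sdiff]; exact hv)⟩)
  have hDRnotHs : ∀ v ∈ DR, ∀ e ∈ Hs, v ∉ e := by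
    intro v hv e he hve
    rw [hDRdef, Finset.mem_sdiff] at hv
    exact hv.2 (by
      rw [hXDdef, Finset.mem_filter]
      exact ⟨Finset.mem_univ v, ⟨e, he, hve⟩,
        hDRD v (by rw [hDRdef, Finset.mem_sdiff]; exact hv)⟩)
  have hHsm : IsMatching Hs := isMatching_subset hFm hHsF
  obtain ⟨PD, hPDm, hPDc, hPDin, hPDcov⟩ := exists_pm_on DR (hDRcard ▸ hevk)
  -- machine that derives the contradiction from a suitable k-matching F'' with
  -- exactly one edge crossing S
  have assemble : ∀ F'' : Finset (Edge (npar k m)), IsMatching F'' → F''.card = k →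
      Hs ⊆ F'' → (∀ e ∈ F'', insideCD f e) →
      (∀ v : Fin (npar k m), inCD f v → ∃ e ∈ F'', v ∈ e) →
      ∀ e₀ ∈ F'', (∃ a b : Fin (npar k m), e₀ = s(a, b) ∧ a ∈ S ∧ b ∉ S ∧ inCD f b) →
      (∀ e ∈ F'', e ≠ e₀ →
        ((∀ v : Fin (npar k m), v ∈ e → v ∈ S) ∨ (∀ v : Fin (npar k m), v ∈ e → v ∉ S))) →
      False := by
    intro F'' hFm'' hFc'' hHsF'' hins hcov e₀ he₀F he₀x hnox
    obtain ⟨hMgpos, hMgb⟩ := hgoodHs.1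
    have hlow := (hMgb F'' hFm'' hFc'' hHsF'' hins).1
    have hpMF : 0 < pM f Mm F'' := lt_of_lt_of_le hMgpos hlow
    obtain ⟨M, hMall, hFM, hMMm⟩ :
        {M | M ∈ MallT f ∧ F'' ⊆ M ∧ M ∈ Mm}.Nonempty := by
      unfold pM at hpMF
      exact nonempty_of_ratio_pos hpMF
    obtain ⟨hMpm, hMallow⟩ := hMall
    have hcut : (↑M : Set (Edge (npar k m))) ∩ cutSet (↑U : Set (Fin (npar k m))) = {e₀} := by
      ext e
      simp only [Set.mem_inter_iff, Set.mem_singleton_iff, Finset.mem_coe]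
      constructor
      · rintro ⟨heM, a, b, heq, haU, hbU⟩
        replace haU : a ∈ U := haU
        replace hbU : b ∉ U := hbU
        obtain ⟨a', b', heq', hcase⟩ := hMallow e heM
        have hiff : (∃ i, f a = Lbl.A i ∧ f b = Lbl.A i) ∨ (inCD f a ∧ inCD f b) ∨
            (∃ i, f a = Lbl.B i ∧ f b = Lbl.B i) := by
          have hsym2 : s(a, b) = s(a', b') := heq.symm.trans heq'
          rcases Sym2.eq_iff.mp hsym2 with ⟨h1, h2⟩ | ⟨h1, h2⟩
          · rw [h1, h2]; exact hcase
          · rw [h1, h2]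
            rcases hcase with ⟨i, hx, hy⟩ | ⟨hx, hy⟩ | ⟨i, hx, hy⟩
            · exact Or.inl ⟨i, hy, hx⟩
            · exact Or.inr (Or.inl ⟨hy, hx⟩)
            · exact Or.inr (Or.inr ⟨i, hy, hx⟩)
        rcases hiff with ⟨i, hai, hbi⟩ | ⟨haCD, hbCD⟩ | ⟨i, hai, hbi⟩
        · rcases hUA i with hdis | hsub
          · exact absurd hai (Set.disjoint_left.mp hdis (Finset.mem_coe.mpr haU))
          · exact absurd (Finset.mem_coe.mp (hsub hbi)) hbU
        · have haC : f a = Lbl.C := by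
            rcases haCD with h | h
            · exact h
            · exact absurd haU (hUD a h)
          have haS : a ∈ S := (hUchar a haC).mp haU
          obtain ⟨e', he'F, hae'⟩ := hcov a (Or.inl haC)
          have hee' : e = e' := by
            by_contra hne
            exact hMpm.1.2 e heM e' (hFM he'F) hne a
              (by rw [heq]; exact Sym2.mem_mk_left a b) hae'
          have heF : e ∈ F'' := hee' ▸ he'F
          by_contra hne₀
          rcases hnox e heF hne₀ with hall | hall
          · exact hbU (hSU b (hall b (by rw [heq]; exact Sym2.mem_mk_right a b)))
          · exact hall a (by rw [heq]; exact Sym2.mem_mk_left a b) haS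
        · rcases hUlab a haU with ⟨j, hj⟩ | hj <;> rw [hai] at hj <;> simp at hj
      · rintro rfl
        obtain ⟨a, b, heq, haS, hbS, hbCD⟩ := he₀x
        exact ⟨hFM he₀F, a, b, heq, hSU a haS, fun hbU => hbS ((hUcharCD b hbCD).mp hbU)⟩
    have hQ : (U, M) ∈ Qset (npar k m) (tpar k m) 1 := by
      refine ⟨hUcard, hMpm, ?_⟩
      show ((↑M : Set (Edge (npar k m))) ∩ cutSet (↑U : Set (Fin (npar k m)))).ncard = 1
      rw [hcut, Set.ncard_singleton]
    have hRQ : ((Uu ×ˢ Mm) ∩ Qset (npar k m) (tpar k m) 1).Nonempty :=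
      ⟨(U, M), ⟨hUmem, hMMm⟩, hQ⟩
    have hQne : (Qset (npar k m) (tpar k m) 1).Nonempty := ⟨(U, M), hQ⟩
    have hmupos : 0 < mu (npar k m) (tpar k m) 1 (Uu ×ˢ Mm) := by
      unfold mu
      apply div_pos
      · exact_mod_cast (Set.ncard_pos (Set.toFinite _)).mpr hRQ
      · exact_mod_cast (Set.ncard_pos (Set.toFinite _)).mpr hQne
    rw [hmu1] at hmupos
    exact lt_irrefl 0 hmupos
  -- builder for F'' from a matching PC on R
  have mkF : ∀ PC : Finset (Edge (npar k m)), IsMatching PC → 2 * PC.card = k - 3 →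
      (∀ e ∈ PC, ∀ v : Fin (npar k m), v ∈ e → v ∈ R) → (∀ v ∈ R, ∃ e ∈ PC, v ∈ e) →
      (IsMatching ((Hs ∪ PC) ∪ PD) ∧ ((Hs ∪ PC) ∪ PD).card = k ∧ Hs ⊆ (Hs ∪ PC) ∪ PD ∧
       (∀ e ∈ (Hs ∪ PC) ∪ PD, insideCD f e) ∧
       (∀ v : Fin (npar k m), inCD f v → ∃ e ∈ (Hs ∪ PC) ∪ PD, v ∈ e)) := by
    intro PC hPCm hPCc hPCin hPCcov
    have hdHsPC : ∀ e ∈ Hs, ∀ g ∈ PC, ∀ v : Fin (npar k m), v ∈ e → v ∉ g := by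
      intro e he g hg v hve hvg
      exact hRnotHs v (hPCin g hg v hvg) e he hve
    have hdHsPD : ∀ e ∈ Hs, ∀ g ∈ PD, ∀ v : Fin (npar k m), v ∈ e → v ∉ g := by
      intro e he g hg v hve hvg
      exact hDRnotHs v (hPDin g hg v hvg) e he hve
    have hdPCPD : ∀ e ∈ PC, ∀ g ∈ PD, ∀ v : Fin (npar k m), v ∈ e → v ∉ g := by
      intro e he g hg v hve hvg
      have h1 := hRC v (hPCin e he v hve)
      have h2 := hDRD v (hPDin g hg v hvg)
      rw [h1] at h2; simp at h2
    have hm1 : IsMatching (Hs ∪ PC) := isMatching_union hHsm hPCm hdHsPC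
    have hdUPD : ∀ e ∈ Hs ∪ PC, ∀ g ∈ PD, ∀ v : Fin (npar k m), v ∈ e → v ∉ g := by
      intro e he
      rcases Finset.mem_union.mp he with he | he
      · exact hdHsPD e he
      · exact hdPCPD e he
    have hm2 : IsMatching ((Hs ∪ PC) ∪ PD) := isMatching_union hm1 hPDm hdUPD
    have hd1 : Disjoint Hs PC := disjoint_of_vertex_disjoint hdHsPC
    have hd2 : Disjoint (Hs ∪ PC) PD := disjoint_of_vertex_disjoint hdUPD
    have hcard : ((Hs ∪ PC) ∪ PD).card = k := by
      rw [Finset.card_union_of_disjoint hd2, Finset.card_union_of_disjoint hd1, hHs3]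
      omega
    refine ⟨hm2, hcard, fun e he => Finset.mem_union_left _ (Finset.mem_union_left _ he),
      ?_, ?_⟩
    · intro e he
      rcases Finset.mem_union.mp he with he | he
      · rcases Finset.mem_union.mp he with he | he
        · obtain ⟨a, b, heq, ha, hb⟩ := hFcd e (hHsF he)
          exact ⟨a, b, heq, Or.inl ha, Or.inr hb⟩
        · obtain ⟨a, b, heq⟩ := edge_exists_rep e
          exact ⟨a, b, heq,
            Or.inl (hRC a (hPCin e he a (by rw [heq]; exact Sym2.mem_mk_left a b))),
            Or.inl (hRC b (hPCin e he b (by rw [heq]; exact Sym2.mem_mk_right a b)))⟩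
      · obtain ⟨a, b, heq⟩ := edge_exists_rep e
        exact ⟨a, b, heq,
          Or.inr (hDRD a (hPDin e he a (by rw [heq]; exact Sym2.mem_mk_left a b))),
          Or.inr (hDRD b (hPDin e he b (by rw [heq]; exact Sym2.mem_mk_right a b)))⟩
    · intro v hv
      rcases hv with hC | hD
      · by_cases hvX : v ∈ X
        · rw [hXdef, Finset.mem_filter] at hvX
          obtain ⟨e, he, hve⟩ := hvX.2.1
          exact ⟨e, Finset.mem_union_left _ (Finset.mem_union_left _ he), hve⟩
        · have hvR : v ∈ R := by
            rw [hRdef, Finset.mem_sdiff]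
            exact ⟨by rw [hCfin, Finset.mem_filter]; exact ⟨Finset.mem_univ v, hC⟩, hvX⟩
          obtain ⟨e, he, hve⟩ := hPCcov v hvR
          exact ⟨e, Finset.mem_union_left _ (Finset.mem_union_right _ he), hve⟩
      · by_cases hvX : v ∈ XD
        · rw [hXDdef, Finset.mem_filter] at hvX
          obtain ⟨e, he, hve⟩ := hvX.2.1
          exact ⟨e, Finset.mem_union_left _ (Finset.mem_union_left _ he), hve⟩
        · have hvR : v ∈ DR := by
            rw [hDRdef, Finset.mem_sdiff]
            exact ⟨by rw [hDfin, Finset.mem_filter]; exact ⟨Finset.mem_univ v, hD⟩, hvX⟩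
          obtain ⟨e, he, hve⟩ := hPDcov v hvR
          exact ⟨e, Finset.mem_union_right _ he, hve⟩
  -- now construct the crossing witness, by cases on the overlap W
  have hW01 : W.card = 0 ∨ W.card = 1 := by omega
  rcases hW01 with h0 | h1
  · -- W empty : H and Hs use disjoint C-nodes
    have hWem : W = ∅ := Finset.card_eq_zero.mp h0
    have hSXS : ∀ v ∈ S, v ∉ X := by
      intro v hvS hvX
      have hvW : v ∈ W := by rw [hWdef, Finset.mem_inter]; exact ⟨hvS, hvX⟩
      rw [hWem] at hvW
      exact absurd hvW (Finset.notMem_empty v)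
    have hSsubR : S ⊆ R := by
      intro v hv
      rw [hRdef, Finset.mem_sdiff]
      exact ⟨hSsubCfin hv, hSXS v hv⟩
    obtain ⟨x, y, z, hxy, hxz, hyz, hSeq⟩ := Finset.card_eq_three.mp hScard
    have hxS : x ∈ S := by rw [hSeq]; simp
    have hyS : y ∈ S := by rw [hSeq]; simp
    have hzS : z ∈ S := by rw [hSeq]; simp
    have hk7 : 7 ≤ k := by
      have hle := Finset.card_le_card hSsubR
      rw [hScard, hRcard] at hle
      rcases hk with ⟨j, hj⟩
      omega
    have hRS : (R \ S).card = k - 6 := by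
      rw [Finset.card_sdiff_of_subset hSsubR, hRcard, hScard]
      omega
    have hRSne : (R \ S).Nonempty := by
      rw [← Finset.card_pos, hRS]; omega
    obtain ⟨w, hw⟩ := hRSne
    rw [Finset.mem_sdiff] at hw
    have hwx : w ≠ x := fun h => hw.2 (h ▸ hxS)
    have hwy : w ≠ y := fun h => hw.2 (h ▸ hyS)
    have hwz : w ≠ z := fun h => hw.2 (h ▸ hzS)
    have hzw : z ≠ w := Ne.symm hwz
    have hQ4sub : ({x, y, z, w} : Finset (Fin (npar k m))) ⊆ R := by
      intro v hv
      simp only [Finset.mem_insert, Finset.mem_singleton] at hv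
      rcases hv with rfl | rfl | rfl | rfl
      · exact hSsubR hxS
      · exact hSsubR hyS
      · exact hSsubR hzS
      · exact hw.1
    have hQ4card : ({x, y, z, w} : Finset (Fin (npar k m))).card = 4 := by
      rw [Finset.card_insert_of_notMem (by simp [hxy, hxz, Ne.symm hwx]),
        Finset.card_insert_of_notMem (by simp [hyz, Ne.symm hwy]),
        Finset.card_insert_of_notMem (by simp [Ne.symm hwz]), Finset.card_singleton]
    have hR'card : (R \ ({x, y, z, w} : Finset (Fin (npar k m)))).card = k - 7 := by
      rw [Finset.card_sdiff_of_subset hQ4sub, hRcard, hQ4card]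
      omega
    have hevR' : Even (R \ ({x, y, z, w} : Finset (Fin (npar k m)))).card := by
      rw [hR'card]
      rcases hk with ⟨j, hj⟩
      exact ⟨j - 3, by omega⟩
    obtain ⟨P₀, hP₀m, hP₀c, hP₀in, hP₀cov⟩ := exists_pm_on _ hevR'
    have hP₀R : ∀ e ∈ P₀, ∀ v : Fin (npar k m), v ∈ e →
        v ∈ R ∧ v ≠ x ∧ v ≠ y ∧ v ≠ z ∧ v ≠ w := by
      intro e he v hv
      have h := hP₀in e he v hv
      rw [Finset.mem_sdiff] at h
      simp only [Finset.mem_insert, Finset.mem_singleton] at h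
      exact ⟨h.1, fun hh => h.2 (Or.inl hh), fun hh => h.2 (Or.inr (Or.inl hh)),
        fun hh => h.2 (Or.inr (Or.inr (Or.inl hh))),
        fun hh => h.2 (Or.inr (Or.inr (Or.inr hh)))⟩
    have hd12 : ∀ e ∈ ({s(x,y)} : Finset (Edge (npar k m))),
        ∀ g ∈ ({s(z,w)} : Finset (Edge (npar k m))),
        ∀ v : Fin (npar k m), v ∈ e → v ∉ g := by
      intro e he g hg v hve hvg
      rw [Finset.mem_singleton] at he hg
      subst he; subst hg
      rcases Sym2.mem_iff.mp hve with h1 | h1 <;> rcases Sym2.mem_iff.mp hvg with h2 | h2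
      · exact hxz (h1.symm.trans h2)
      · exact hwx (h2.symm.trans h1)
      · exact hyz (h1.symm.trans h2)
      · exact hwy (h2.symm.trans h1)
    have hm12 : IsMatching ({s(x,y)} ∪ {s(z,w)} : Finset (Edge (npar k m))) :=
      isMatching_union (isMatching_singleton hxy) (isMatching_singleton hzw) hd12
    have hd12P₀ : ∀ e ∈ ({s(x,y)} ∪ {s(z,w)} : Finset (Edge (npar k m))), ∀ g ∈ P₀,
        ∀ v : Fin (npar k m), v ∈ e → v ∉ g := by
      intro e he g hg v hve hvg
      have hne := hP₀R g hg v hvg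
      rcases Finset.mem_union.mp he with he | he <;> rw [Finset.mem_singleton] at he <;>
        subst he <;> rcases Sym2.mem_iff.mp hve with h1 | h1
      · exact hne.2.1 h1
      · exact hne.2.2.1 h1
      · exact hne.2.2.2.1 h1
      · exact hne.2.2.2.2 h1
    have hPCm : IsMatching (({s(x,y)} ∪ {s(z,w)}) ∪ P₀ : Finset (Edge (npar k m))) :=
      isMatching_union hm12 hP₀m hd12P₀
    have hPCc : 2 * (({s(x,y)} ∪ {s(z,w)}) ∪ P₀ : Finset (Edge (npar k m))).card = k - 3 := by
      rw [Finset.card_union_of_disjoint (disjoint_of_vertex_disjoint hd12P₀),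
        Finset.card_union_of_disjoint (disjoint_of_vertex_disjoint hd12),
        Finset.card_singleton, Finset.card_singleton]
      omega
    have hPCin : ∀ e ∈ (({s(x,y)} ∪ {s(z,w)}) ∪ P₀ : Finset (Edge (npar k m))),
        ∀ v : Fin (npar k m), v ∈ e → v ∈ R := by
      intro e he v hv
      rcases Finset.mem_union.mp he with he | he
      · rcases Finset.mem_union.mp he with he | he <;> rw [Finset.mem_singleton] at he <;>
          subst he <;> rcases Sym2.mem_iff.mp hv with h1 | h1 <;> rw [h1]
        · exact hSsubR hxS
        · exact hSsubR hyS
        · exact hSsubR hzS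
        · exact hw.1
      · exact (hP₀R e he v hv).1
    have hPCcov : ∀ v ∈ R, ∃ e ∈ (({s(x,y)} ∪ {s(z,w)}) ∪ P₀ : Finset (Edge (npar k m))),
        v ∈ e := by
      intro v hv
      by_cases hvx : v = x
      · exact ⟨s(x,y), Finset.mem_union_left _ (Finset.mem_union_left _
          (Finset.mem_singleton_self _)), by rw [hvx]; exact Sym2.mem_mk_left x y⟩
      by_cases hvy : v = y
      · exact ⟨s(x,y), Finset.mem_union_left _ (Finset.mem_union_left _
          (Finset.mem_singleton_self _)), by rw [hvy]; exact Sym2.mem_mk_right x y⟩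
      by_cases hvz : v = z
      · exact ⟨s(z,w), Finset.mem_union_left _ (Finset.mem_union_right _
          (Finset.mem_singleton_self _)), by rw [hvz]; exact Sym2.mem_mk_left z w⟩
      by_cases hvw : v = w
      · exact ⟨s(z,w), Finset.mem_union_left _ (Finset.mem_union_right _
          (Finset.mem_singleton_self _)), by rw [hvw]; exact Sym2.mem_mk_right z w⟩
      · have hv' : v ∈ R \ ({x, y, z, w} : Finset (Fin (npar k m))) := by
          rw [Finset.mem_sdiff]
          simp only [Finset.mem_insert, Finset.mem_singleton]
          exact ⟨hv, fun hh => by rcases hh with h|h|h|h; exacts [hvx h, hvy h, hvz h, hvw h]⟩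
        obtain ⟨e, he, hve⟩ := hP₀cov v hv'
        exact ⟨e, Finset.mem_union_right _ he, hve⟩
    obtain ⟨hm'', hc'', hsub'', hins'', hcov''⟩ := mkF _ hPCm hPCc hPCin hPCcov
    have he₀F : s(z,w) ∈ (Hs ∪ (({s(x,y)} ∪ {s(z,w)}) ∪ P₀)) ∪ PD :=
      Finset.mem_union_left _ (Finset.mem_union_right _ (Finset.mem_union_left _
        (Finset.mem_union_right _ (Finset.mem_singleton_self _))))
    refine assemble _ hm'' hc'' hsub'' hins'' hcov'' s(z,w) he₀F
      ⟨z, w, rfl, hzS, hw.2, Or.inl (hRC w hw.1)⟩ ?_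
    intro e he hne
    rcases Finset.mem_union.mp he with he | he
    · rcases Finset.mem_union.mp he with he | he
      · -- e ∈ Hs
        right
        intro v hv hvS
        have hvC : f v = Lbl.C := hSsubC v hvS
        have hvX : v ∈ X := by
          rw [hXdef, Finset.mem_filter]
          exact ⟨Finset.mem_univ v, ⟨e, he, hv⟩, hvC⟩
        exact hSXS v hvS hvX
      · rcases Finset.mem_union.mp he with he | he
        · rcases Finset.mem_union.mp he with he | he <;> rw [Finset.mem_singleton] at he
          · -- e = s(x,y)
            left
            subst he
            intro v hv
            rcases Sym2.mem_iff.mp hv with h1 | h1 <;> rw [h1]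
            · exact hxS
            · exact hyS
          · exact absurd he hne
        · -- e ∈ P₀
          right
          intro v hv hvS
          have h := hP₀R e he v hv
          have : v ∈ ({x, y, z} : Finset (Fin (npar k m))) := by rw [← hSeq]; exact hvS
          simp only [Finset.mem_insert, Finset.mem_singleton] at this
          rcases this with rfl | rfl | rfl
          · exact h.2.1 rfl
          · exact h.2.2.1 rfl
          · exact h.2.2.2.1 rfl
    · -- e ∈ PD
      right
      intro v hv hvS
      exact hDnotS v (hDRD v (hPDin e he v hv)) hvS
  · -- W = {c₀} : H and Hs share exactly one C-node
    obtain ⟨c₀, hWc⟩ := Finset.card_eq_one.mp h1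
    have hc₀W : c₀ ∈ W := by rw [hWc]; exact Finset.mem_singleton_self c₀
    have hc₀SX : c₀ ∈ S ∧ c₀ ∈ X := by
      rw [hWdef, Finset.mem_inter] at hc₀W; exact hc₀W
    obtain ⟨e₀, he₀Hs, hc₀e₀⟩ : ∃ e ∈ Hs, c₀ ∈ e := by
      have := hc₀SX.2
      rw [hXdef, Finset.mem_filter] at this
      exact this.2.1
    have hSX2 : (S \ X).card = 2 := by
      have h := Finset.card_sdiff_add_card_inter S X
      rw [hScard, ← hWdef, h1] at h
      omega
    obtain ⟨x, y, hxy, hxyeq⟩ := Finset.card_eq_two.mp hSX2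
    have hx : x ∈ S \ X := by rw [hxyeq]; simp
    have hy : y ∈ S \ X := by rw [hxyeq]; simp
    have hxS : x ∈ S := (Finset.mem_sdiff.mp hx).1
    have hyS : y ∈ S := (Finset.mem_sdiff.mp hy).1
    have hSXsubR : S \ X ⊆ R := by
      intro v hv
      rw [Finset.mem_sdiff] at hv
      rw [hRdef, Finset.mem_sdiff]
      exact ⟨hSsubCfin hv.1, hv.2⟩
    have hxR : x ∈ R := hSXsubR hx
    have hyR : y ∈ R := hSXsubR hy
    have hxysub : ({x, y} : Finset (Fin (npar k m))) ⊆ R := by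
      rw [Finset.insert_subset_iff, Finset.singleton_subset_iff]
      exact ⟨hxR, hyR⟩
    have hR'card : (R \ ({x, y} : Finset (Fin (npar k m)))).card = k - 5 := by
      rw [Finset.card_sdiff_of_subset hxysub, hRcard, Finset.card_pair hxy]
      omega
    have hevR' : Even (R \ ({x, y} : Finset (Fin (npar k m)))).card := by
      rw [hR'card]
      rcases hk with ⟨j, hj⟩
      exact ⟨j - 2, by omega⟩
    obtain ⟨P₀, hP₀m, hP₀c, hP₀in, hP₀cov⟩ := exists_pm_on _ hevR'
    have hP₀R : ∀ e ∈ P₀, ∀ v : Fin (npar k m), v ∈ e → v ∈ R ∧ v ≠ x ∧ v ≠ y := by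
      intro e he v hv
      have h := hP₀in e he v hv
      rw [Finset.mem_sdiff] at h
      simp only [Finset.mem_insert, Finset.mem_singleton] at h
      exact ⟨h.1, fun hh => h.2 (Or.inl hh), fun hh => h.2 (Or.inr hh)⟩
    have hdxyP₀ : ∀ e ∈ ({s(x,y)} : Finset (Edge (npar k m))), ∀ g ∈ P₀,
        ∀ v : Fin (npar k m), v ∈ e → v ∉ g := by
      intro e he g hg v hve hvg
      rw [Finset.mem_singleton] at he
      subst he
      have h := hP₀R g hg v hvg
      rcases Sym2.mem_iff.mp hve with h1 | h1
      · exact h.2.1 h1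
      · exact h.2.2 h1
    have hPCm : IsMatching ({s(x,y)} ∪ P₀ : Finset (Edge (npar k m))) :=
      isMatching_union (isMatching_singleton hxy) hP₀m hdxyP₀
    have hPCc : 2 * ({s(x,y)} ∪ P₀ : Finset (Edge (npar k m))).card = k - 3 := by
      rw [Finset.card_union_of_disjoint (disjoint_of_vertex_disjoint hdxyP₀),
        Finset.card_singleton]
      omega
    have hPCin : ∀ e ∈ ({s(x,y)} ∪ P₀ : Finset (Edge (npar k m))),
        ∀ v : Fin (npar k m), v ∈ e → v ∈ R := by
      intro e he v hv
      rcases Finset.mem_union.mp he with he | he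
      · rw [Finset.mem_singleton] at he
        subst he
        rcases Sym2.mem_iff.mp hv with h1 | h1 <;> rw [h1]
        · exact hxR
        · exact hyR
      · exact (hP₀R e he v hv).1
    have hPCcov : ∀ v ∈ R, ∃ e ∈ ({s(x,y)} ∪ P₀ : Finset (Edge (npar k m))), v ∈ e := by
      intro v hv
      by_cases hvx : v = x
      · exact ⟨s(x,y), Finset.mem_union_left _ (Finset.mem_singleton_self _),
          by rw [hvx]; exact Sym2.mem_mk_left x y⟩
      by_cases hvy : v = y
      · exact ⟨s(x,y), Finset.mem_union_left _ (Finset.mem_singleton_self _),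
          by rw [hvy]; exact Sym2.mem_mk_right x y⟩
      · have hv' : v ∈ R \ ({x, y} : Finset (Fin (npar k m))) := by
          rw [Finset.mem_sdiff]
          simp only [Finset.mem_insert, Finset.mem_singleton]
          exact ⟨hv, fun hh => by rcases hh with h|h; exacts [hvx h, hvy h]⟩
        obtain ⟨e, he, hve⟩ := hP₀cov v hv'
        exact ⟨e, Finset.mem_union_right _ he, hve⟩
    obtain ⟨hm'', hc'', hsub'', hins'', hcov''⟩ := mkF _ hPCm hPCc hPCin hPCcov
    have he₀F : e₀ ∈ (Hs ∪ ({s(x,y)} ∪ P₀)) ∪ PD :=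
      Finset.mem_union_left _ (Finset.mem_union_left _ he₀Hs)
    obtain ⟨a, b, heqe₀, haC, hbD⟩ := hFcd e₀ (hHsF he₀Hs)
    have hc₀a : c₀ = a := by
      have hmem := hc₀e₀
      rw [heqe₀, Sym2.mem_iff] at hmem
      rcases hmem with h | h
      · exact h
      · have hC := hSsubC c₀ hc₀SX.1
        rw [h, hbD] at hC
        simp at hC
    refine assemble _ hm'' hc'' hsub'' hins'' hcov'' e₀ he₀F
      ⟨a, b, heqe₀, hc₀a ▸ hc₀SX.1, hDnotS b hbD, Or.inr hbD⟩ ?_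
    intro e he hne
    rcases Finset.mem_union.mp he with he | he
    · rcases Finset.mem_union.mp he with he | he
      · -- e ∈ Hs, e ≠ e₀ : no vertex in S
        right
        intro v hv hvS
        have hvC : f v = Lbl.C := hSsubC v hvS
        have hvX : v ∈ X := by
          rw [hXdef, Finset.mem_filter]
          exact ⟨Finset.mem_univ v, ⟨e, he, hv⟩, hvC⟩
        have hvW : v ∈ W := by rw [hWdef, Finset.mem_inter]; exact ⟨hvS, hvX⟩
        rw [hWc, Finset.mem_singleton] at hvW
        exact hHsm.2 e he e₀ he₀Hs hne c₀ (hvW ▸ hv) hc₀e₀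
      · rcases Finset.mem_union.mp he with he | he
        · -- e = s(x,y)
          left
          rw [Finset.mem_singleton] at he
          subst he
          intro v hv
          rcases Sym2.mem_iff.mp hv with h1 | h1 <;> rw [h1]
          · exact hxS
          · exact hyS
        · -- e ∈ P₀
          right
          intro v hv hvS
          have h := hP₀R e he v hv
          have hvSX : v ∈ S \ X := by
            rw [Finset.mem_sdiff]
            refine ⟨hvS, ?_⟩
            have hvR := h.1
            rw [hRdef, Finset.mem_sdiff] at hvR
            exact hvR.2
          rw [hxyeq] at hvSX
          simp only [Finset.mem_insert, Finset.mem_singleton] at hvSX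
          rcases hvSX with rfl | rfl
          · exact h.2.1 rfl
          · exact h.2.2 rfl
    · -- e ∈ PD
      right
      intro v hv hvS
      exact hDnotS v (hDRD v (hPDin e he v hv)) hvS




end MatchingLB
end

section
/- For all ε > 0 and q ∈ ℕ there is a constant δ = δ(ε,q) > 0 so that the following holds: take finite sets X_1,…,X_m with 1 ≤ |X_i| ≤ q for all i and set X := X_1 × … × X_m; let Y ⊆ X with |Y| ≥ 2^{−δ·m}·|X|. Call an index i ∈ [m] ε-unbiased if (1/(1+ε))·(1/|X_i|) ≤ Pr_{y ∼ uniform on Y}[y_i = j] ≤ (1+ε)·(1/|X_i|) for all j ∈ X_i. Then the number of indices that are not ε-unbiased is at most ε·m. -/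
open Finset

section Helpers

/-- `G x = x log x - x + 1`, the pointwise KL-divergence function. -/
noncomputable def Gfun (x : ℝ) : ℝ := x * Real.log x - x + 1

lemma Gfun_nonneg {x : ℝ} (hx : 0 ≤ x) : 0 ≤ Gfun x := by
  rcases eq_or_lt_of_le hx with h | h
  · simp [Gfun, ← h]
  · have h2 := Real.log_le_sub_one_of_pos (inv_pos.2 h)
    rw [Real.log_inv] at h2
    have h3 := mul_le_mul_of_nonneg_left h2 h.le
    rw [mul_sub, mul_inv_cancel₀ h.ne', mul_neg, mul_one] at h3
    simp only [Gfun]; linarith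

lemma Gfun_pos {x : ℝ} (hx : 0 < x) (hx1 : x ≠ 1) : 0 < Gfun x := by
  have h2 := Real.log_lt_sub_one_of_pos (inv_pos.2 hx) (by simpa using hx1)
  rw [Real.log_inv] at h2
  have h3 := mul_lt_mul_of_pos_left h2 hx
  rw [mul_sub, mul_inv_cancel₀ hx.ne', mul_neg, mul_one] at h3
  simp only [Gfun]; linarith

lemma Gfun_hasDeriv {x : ℝ} (hx : x ≠ 0) : HasDerivAt Gfun (Real.log x) x := by
  have h := ((Real.hasDerivAt_mul_log hx).sub (hasDerivAt_id x)).add_const 1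
  show HasDerivAt (fun x => x * Real.log x - x + 1) (Real.log x) x
  simpa [Gfun] using h

lemma Gfun_continuous : Continuous Gfun := by
  exact (Real.continuous_mul_log.sub continuous_id).add continuous_const

lemma Gfun_mono : MonotoneOn Gfun (Set.Ici 1) := by
  refine monotoneOn_of_deriv_nonneg (convex_Ici 1) Gfun_continuous.continuousOn ?_ ?_
  · intro x hx
    rw [interior_Ici] at hx
    have hx0 : (0:ℝ) < x := lt_trans one_pos hx
    exact (Gfun_hasDeriv hx0.ne').differentiableAt.differentiableWithinAt
  · intro x hx
    rw [interior_Ici] at hx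
    rw [(Gfun_hasDeriv (lt_trans one_pos hx).ne').deriv]
    exact Real.log_nonneg hx.le

lemma Gfun_anti : AntitoneOn Gfun (Set.Icc 0 1) := by
  refine antitoneOn_of_deriv_nonpos (convex_Icc 0 1) Gfun_continuous.continuousOn ?_ ?_
  · intro x hx
    rw [interior_Icc] at hx
    exact (Gfun_hasDeriv hx.1.ne').differentiableAt.differentiableWithinAt
  · intro x hx
    rw [interior_Icc] at hx
    rw [(Gfun_hasDeriv hx.1.ne').deriv]
    exact Real.log_nonpos hx.1.le hx.2.le

lemma entropy_decomp {α : Type*} [Fintype α] [Nonempty α] (p : α → ℝ)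
    (hp : ∀ j, 0 ≤ p j) (hsum : ∑ j, p j = 1) :
    Real.log (Fintype.card α) - ∑ j, Real.negMulLog (p j)
      = (Fintype.card α : ℝ)⁻¹ * ∑ j, Gfun ((Fintype.card α : ℝ) * p j) := by
  have hn : (0:ℝ) < (Fintype.card α : ℝ) := by exact_mod_cast Fintype.card_pos
  set n : ℝ := (Fintype.card α : ℝ) with hndef
  have hterm : ∀ j, n⁻¹ * Gfun (n * p j)
      = p j * Real.log n + p j * Real.log (p j) - p j + n⁻¹ := by
    intro j
    rcases eq_or_lt_of_le (hp j) with h | h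
    · simp [Gfun, ← h]
    · have hlog : Real.log (n * p j) = Real.log n + Real.log (p j) :=
        Real.log_mul hn.ne' h.ne'
      simp only [Gfun, hlog]
      field_simp
  rw [Finset.mul_sum]
  rw [Finset.sum_congr rfl fun j _ => hterm j]
  have h1 : ∑ j, (p j * Real.log n + p j * Real.log (p j) - p j + n⁻¹)
      = (∑ j, p j) * Real.log n + (∑ j, p j * Real.log (p j)) - (∑ j, p j)
        + (Fintype.card α : ℝ) * n⁻¹ := by
    rw [Finset.sum_add_distrib, Finset.sum_sub_distrib, Finset.sum_add_distrib,
      Finset.sum_const, ← Finset.sum_mul]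
    simp [nsmul_eq_mul]
  rw [h1, hsum, mul_inv_cancel₀ hn.ne']
  simp only [Real.negMulLog, neg_mul, Finset.sum_neg_distrib]
  ring

lemma entropy_le_log {α : Type*} [Fintype α] [Nonempty α] (p : α → ℝ)
    (hp : ∀ j, 0 ≤ p j) (hsum : ∑ j, p j = 1) :
    ∑ j, Real.negMulLog (p j) ≤ Real.log (Fintype.card α) := by
  have h := entropy_decomp p hp hsum
  have hn : (0:ℝ) < (Fintype.card α : ℝ) := by exact_mod_cast Fintype.card_pos
  have h2 : 0 ≤ ∑ j, Gfun ((Fintype.card α : ℝ) * p j) :=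
    Finset.sum_nonneg fun j _ => Gfun_nonneg (mul_nonneg hn.le (hp j))
  nlinarith [inv_pos.2 hn]

lemma entropy_deficit {α : Type*} [Fintype α] [Nonempty α] (p : α → ℝ) {ε : ℝ} (hε : 0 < ε)
    (hp : ∀ j, 0 ≤ p j) (hsum : ∑ j, p j = 1) (j0 : α)
    (hbias : (Fintype.card α : ℝ) * p j0 ≤ (1+ε)⁻¹ ∨ 1 + ε ≤ (Fintype.card α : ℝ) * p j0) :
    ∑ j, Real.negMulLog (p j) ≤ Real.log (Fintype.card α)
      - (Fintype.card α : ℝ)⁻¹ * min (Gfun (1+ε)) (Gfun (1+ε)⁻¹) := by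
  have h := entropy_decomp p hp hsum
  have hn : (0:ℝ) < (Fintype.card α : ℝ) := by exact_mod_cast Fintype.card_pos
  set x : ℝ := (Fintype.card α : ℝ) * p j0 with hxdef
  have hx0 : 0 ≤ x := mul_nonneg hn.le (hp j0)
  have hone : (1:ℝ) < 1 + ε := by linarith
  have hkey : min (Gfun (1+ε)) (Gfun (1+ε)⁻¹) ≤ Gfun x := by
    rcases hbias with hb | hb
    · refine (min_le_right _ _).trans ?_
      have hmem : x ∈ Set.Icc (0:ℝ) 1 :=
        ⟨hx0, hb.trans (inv_le_one_of_one_le₀ hone.le)⟩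
      have hmem' : (1+ε)⁻¹ ∈ Set.Icc (0:ℝ) 1 :=
        ⟨by positivity, inv_le_one_of_one_le₀ hone.le⟩
      exact Gfun_anti hmem hmem' hb
    · refine (min_le_left _ _).trans ?_
      exact Gfun_mono (Set.mem_Ici.2 hone.le) (Set.mem_Ici.2 (hone.le.trans hb)) hb
  have h2 : min (Gfun (1+ε)) (Gfun (1+ε)⁻¹) ≤ ∑ j, Gfun ((Fintype.card α : ℝ) * p j) := by
    refine hkey.trans ?_
    exact Finset.single_le_sum (f := fun j => Gfun ((Fintype.card α : ℝ) * p j))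
      (fun j _ => Gfun_nonneg (mul_nonneg hn.le (hp j))) (Finset.mem_univ j0)
  have h3 := mul_le_mul_of_nonneg_left h2 (inv_nonneg.2 hn.le)
  linarith

lemma log_card_le_sum_entropy {m : ℕ} {X : Fin m → Type} [∀ i, Fintype (X i)]
    [∀ i, DecidableEq (X i)] (Y : Finset (∀ i, X i)) (hY : Y.Nonempty) :
    Real.log Y.card ≤
      ∑ i, ∑ j, Real.negMulLog (((Y.filter fun y => y i = j).card : ℝ) / Y.card) := by
  have hN : (0:ℝ) < (Y.card : ℝ) := by exact_mod_cast hY.card_pos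
  set P : ∀ i, X i → ℝ := fun i j => ((Y.filter fun y => y i = j).card : ℝ) / Y.card with hPdef
  have hPpos : ∀ (i : Fin m), ∀ y ∈ Y, 0 < P i (y i) := by
    intro i y hy
    have : 0 < (Y.filter fun z => z i = y i).card :=
      Finset.card_pos.2 ⟨y, Finset.mem_filter.2 ⟨hy, rfl⟩⟩
    exact div_pos (by exact_mod_cast this) hN
  have hPnonneg : ∀ (i : Fin m) (j : X i), 0 ≤ P i j := fun i j => by positivity
  have hPsum : ∀ i : Fin m, ∑ j, P i j = 1 := by
    intro i
    have := Finset.card_eq_sum_card_fiberwise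
      (f := fun y : ∀ i, X i => y i) (s := Y) (t := univ) (fun y _ => mem_univ (y i))
    simp only [hPdef, ← Finset.sum_div]
    rw [div_eq_one_iff_eq hN.ne']
    exact_mod_cast this.symm
  -- marginal entropy as a sum over Y
  have hmarg : ∀ i : Fin m, ∑ j, Real.negMulLog (P i j)
      = ∑ y ∈ Y, (Y.card : ℝ)⁻¹ * (-Real.log (P i (y i))) := by
    intro i
    rw [← Finset.sum_fiberwise_of_maps_to (g := fun y : ∀ i, X i => y i)
      (fun y _ => mem_univ (y i)) (fun y => (Y.card : ℝ)⁻¹ * (-Real.log (P i (y i))))]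
    refine Finset.sum_congr rfl fun j _ => ?_
    rw [Finset.sum_congr rfl (fun y hy => by rw [(Finset.mem_filter.1 hy).2])]
    rw [Finset.sum_const, nsmul_eq_mul]
    simp only [Real.negMulLog, hPdef, div_eq_mul_inv]
    ring
  -- pointwise inequality
  have main : ∀ y ∈ Y, (Y.card : ℝ)⁻¹ * Real.log Y.card
      ≤ (∑ i, (Y.card : ℝ)⁻¹ * (-Real.log (P i (y i))))
        + ((∏ i, P i (y i)) - (Y.card : ℝ)⁻¹) := by
    intro y hy
    have hprod : 0 < ∏ i, P i (y i) := Finset.prod_pos fun i _ => hPpos i y hy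
    have hlog := Real.log_le_sub_one_of_pos (mul_pos hN hprod)
    rw [Real.log_mul hN.ne' hprod.ne',
      Real.log_prod (fun i _ => (hPpos i y hy).ne')] at hlog
    have h2 := mul_le_mul_of_nonneg_left hlog (inv_nonneg.2 hN.le)
    rw [mul_add, mul_sub, ← mul_assoc, inv_mul_cancel₀ hN.ne', one_mul, mul_one] at h2
    have e1 : ∑ i, (Y.card : ℝ)⁻¹ * (-Real.log (P i (y i)))
        = -((Y.card : ℝ)⁻¹ * ∑ i, Real.log (P i (y i))) := by
      rw [Finset.mul_sum]; simp
    rw [e1]; linarith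
  have sum_le := Finset.sum_le_sum main
  have lhs_eq : ∑ _y ∈ Y, (Y.card : ℝ)⁻¹ * Real.log Y.card = Real.log Y.card := by
    rw [Finset.sum_const, nsmul_eq_mul, ← mul_assoc, mul_inv_cancel₀ hN.ne', one_mul]
  have hS : ∑ y ∈ Y, ∏ i, P i (y i) ≤ 1 := by
    calc ∑ y ∈ Y, ∏ i, P i (y i)
        ≤ ∑ y : ∀ i, X i, ∏ i, P i (y i) :=
          Finset.sum_le_sum_of_subset_of_nonneg Y.subset_univ
            (fun y _ _ => Finset.prod_nonneg fun i _ => hPnonneg i _)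
      _ = ∏ i, ∑ j, P i j := (Fintype.prod_sum (fun i j => P i j)).symm
      _ = 1 := by simp [hPsum]
  have rhs_eq : ∑ y ∈ Y, ((∑ i, (Y.card : ℝ)⁻¹ * (-Real.log (P i (y i))))
        + ((∏ i, P i (y i)) - (Y.card : ℝ)⁻¹))
      = (∑ i, ∑ j, Real.negMulLog (P i j)) + ((∑ y ∈ Y, ∏ i, P i (y i)) - 1) := by
    rw [Finset.sum_add_distrib, Finset.sum_sub_distrib, Finset.sum_const, nsmul_eq_mul,
      mul_inv_cancel₀ hN.ne', Finset.sum_comm]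
    congr 1
    exact Finset.sum_congr rfl fun i _ => (hmarg i).symm
  rw [lhs_eq, rhs_eq] at sum_le
  calc Real.log Y.card ≤ (∑ i, ∑ j, Real.negMulLog (P i j))
        + ((∑ y ∈ Y, ∏ i, P i (y i)) - 1) := sum_le
    _ ≤ ∑ i, ∑ j, Real.negMulLog (P i j) := by linarith

end Helpers



/-- An index `i` is `ε`-unbiased for a set `Y` of tuples if for every value `j ∈ X_i` the
probability that a uniform `y ∈ Y` has `y_i = j` is within a `(1+ε)` factor of `1/|X_i|`. -/
def Unbiased {m : ℕ} {X : Fin m → Type*} (ε : ℝ) (Y : Set (∀ i, X i)) (i : Fin m) : Prop :=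
  ∀ j : X i,
    (1 / (1 + ε)) * (1 / (Nat.card (X i) : ℝ)) ≤
        ({y ∈ Y | y i = j}.ncard : ℝ) / (Y.ncard : ℝ) ∧
      ({y ∈ Y | y i = j}.ncard : ℝ) / (Y.ncard : ℝ) ≤
        (1 + ε) * (1 / (Nat.card (X i) : ℝ))

/-- Pseudo-random behaviour of large sets: for all `ε > 0` and `q` there is `δ > 0` such that
for finite sets `X_1, …, X_m` with `1 ≤ |X_i| ≤ q` and any `Y ⊆ X_1 × … × X_m` with
`|Y| ≥ 2^{−δm}·|X|`, at most `ε·m` indices fail to be `ε`-unbiased. -/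
theorem few_biased_indices (ε : ℝ) (hε : 0 < ε) (q : ℕ) :
    ∃ δ : ℝ, 0 < δ ∧
      ∀ (m : ℕ) (X : Fin m → Type),
        (∀ i, 1 ≤ Nat.card (X i)) → (∀ i, Nat.card (X i) ≤ q) →
        ∀ Y : Set (∀ i, X i),
          (2 : ℝ) ^ (-(δ * (m : ℝ))) * (Nat.card (∀ i, X i) : ℝ) ≤ (Y.ncard : ℝ) →
          ({i : Fin m | ¬ Unbiased ε Y i}.ncard : ℝ) ≤ ε * m := by
  have hlog2 : (0:ℝ) < Real.log 2 := Real.log_pos one_lt_two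
  have hone : (1:ℝ) < 1 + ε := by linarith
  set c : ℝ := min (Gfun (1+ε)) (Gfun (1+ε)⁻¹) with hcdef
  have hc : 0 < c := lt_min (Gfun_pos (by linarith) hone.ne')
    (Gfun_pos (by positivity) (by
      rw [ne_eq, inv_eq_one]; exact hone.ne'))
  set δ : ℝ := ε * c / ((q+1) * Real.log 2) with hδdef
  have hδ : 0 < δ := by positivity
  refine ⟨δ, hδ, ?_⟩
  intro m X h1 hq Y hY
  rcases Nat.eq_zero_or_pos m with hm | hm
  · subst hm
    have he : ({i : Fin 0 | ¬ Unbiased ε Y i} : Set (Fin 0)) = ∅ :=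
      Set.eq_empty_of_isEmpty _
    simp [he]
  classical
  haveI hfinite : ∀ i, Finite (X i) := fun i => (Nat.card_pos_iff.1 (h1 i)).2
  haveI : ∀ i, Fintype (X i) := fun i => Fintype.ofFinite (X i)
  haveI : ∀ i, Nonempty (X i) := fun i => (Nat.card_pos_iff.1 (h1 i)).1
  have hq1 : 1 ≤ q := le_trans (h1 ⟨0, hm⟩) (hq ⟨0, hm⟩)
  have hq0 : (0:ℝ) < (q:ℝ) := by exact_mod_cast hq1
  -- the set Y as a finset
  have hfin : Y.Finite := Y.toFinite
  set Yf : Finset (∀ i, X i) := hfin.toFinset with hYf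
  have hYcard : (Y.ncard : ℝ) = (Yf.card : ℝ) := by
    rw [Set.ncard_eq_toFinset_card Y hfin]
  have hfib : ∀ (i : Fin m) (j : X i),
      (({y ∈ Y | y i = j} : Set _).ncard : ℝ) = ((Yf.filter fun y => y i = j).card : ℝ) := by
    intro i j
    rw [show ({y ∈ Y | y i = j} : Set _) = ↑(Yf.filter fun y => y i = j) by
      ext y; simp [hYf, Set.Finite.mem_toFinset], Set.ncard_coe_finset]
  -- cardinalities of the ambient product
  have hncd : ∀ i : Fin m, (Nat.card (X i) : ℝ) = (Fintype.card (X i) : ℝ) := by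
    intro i; rw [Nat.card_eq_fintype_card]
  have hnpos : ∀ i : Fin m, (0:ℝ) < (Nat.card (X i) : ℝ) := fun i => by exact_mod_cast h1 i
  have hXcard : (Nat.card (∀ i, X i) : ℝ) = ∏ i, (Nat.card (X i) : ℝ) := by
    rw [Nat.card_pi]; push_cast; rfl
  have hXpos : (0:ℝ) < ∏ i, (Nat.card (X i) : ℝ) := Finset.prod_pos fun i _ => hnpos i
  -- Y is nonempty
  have hNpos : (0:ℝ) < (Yf.card : ℝ) := by
    refine lt_of_lt_of_le ?_ (hYcard ▸ hY)
    exact mul_pos (Real.rpow_pos_of_pos two_pos _) (hXcard ▸ hXpos)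
  have hYne : Yf.Nonempty := Finset.card_pos.1 (by exact_mod_cast hNpos)
  -- marginal probabilities
  set P : ∀ i, X i → ℝ := fun i j => ((Yf.filter fun y => y i = j).card : ℝ) / Yf.card
    with hPdef
  have hPnonneg : ∀ (i : Fin m) (j : X i), 0 ≤ P i j := fun i j => by positivity
  have hPsum : ∀ i : Fin m, ∑ j, P i j = 1 := by
    intro i
    have := Finset.card_eq_sum_card_fiberwise
      (f := fun y : ∀ i, X i => y i) (s := Yf) (t := univ) (fun y _ => mem_univ (y i))
    simp only [hPdef, ← Finset.sum_div]
    rw [div_eq_one_iff_eq hNpos.ne']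
    exact_mod_cast this.symm
  have hratio : ∀ (i : Fin m) (j : X i),
      (({y ∈ Y | y i = j} : Set _).ncard : ℝ) / (Y.ncard : ℝ) = P i j := by
    intro i j; rw [hfib, hYcard]
  -- entropy of each marginal
  set H : Fin m → ℝ := fun i => ∑ j, Real.negMulLog (P i j) with hHdef
  have hHle : ∀ i, H i ≤ Real.log (Nat.card (X i)) := by
    intro i
    rw [hncd i]
    exact entropy_le_log (P i) (hPnonneg i) (hPsum i)
  have hHbias : ∀ i, ¬ Unbiased ε Y i → H i ≤ Real.log (Nat.card (X i)) - c / q := by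
    intro i hbi
    obtain ⟨j, hj⟩ := not_forall.1 hbi
    have hbias : (Fintype.card (X i) : ℝ) * P i j ≤ (1+ε)⁻¹
        ∨ 1 + ε ≤ (Fintype.card (X i) : ℝ) * P i j := by
      rw [← hncd i]
      set n : ℝ := (Nat.card (X i) : ℝ) with hndef
      rcases not_and_or.1 hj with h | h
      · push_neg at h
        rw [hratio i j] at h
        left
        have := mul_lt_mul_of_pos_left h (hnpos i)
        have e : n * ((1 / (1 + ε)) * (1 / n)) = (1+ε)⁻¹ := by
          rw [one_div, one_div, mul_comm ((1+ε)⁻¹) n⁻¹, ← mul_assoc,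
            mul_inv_cancel₀ (hnpos i).ne', one_mul]
        linarith [e ▸ this]
      · push_neg at h
        rw [hratio i j] at h
        right
        have := mul_lt_mul_of_pos_left h (hnpos i)
        have e : n * ((1 + ε) * (1 / n)) = 1 + ε := by
          rw [one_div, mul_comm (1+ε) n⁻¹, ← mul_assoc,
            mul_inv_cancel₀ (hnpos i).ne', one_mul]
        linarith [e ▸ this]
    have hdef := entropy_deficit (P i) hε (hPnonneg i) (hPsum i) j hbias
    rw [← hncd i] at hdef
    have hle2 : c / q ≤ (Nat.card (X i) : ℝ)⁻¹ * c := by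
      rw [inv_mul_eq_div]
      exact div_le_div_of_nonneg_left hc.le (hnpos i) (by exact_mod_cast hq i)
    calc H i ≤ Real.log (Nat.card (X i)) - (Nat.card (X i) : ℝ)⁻¹ * c := hdef
      _ ≤ Real.log (Nat.card (X i)) - c / q := by linarith
  -- subadditivity
  have hsub : Real.log (Yf.card) ≤ ∑ i, H i := log_card_le_sum_entropy Yf hYne
  -- lower bound on log |Y|
  have hlb : Real.log (∏ i, (Nat.card (X i) : ℝ)) - δ * m * Real.log 2
      ≤ Real.log Yf.card := by
    have h2 := Real.log_le_log
      (mul_pos (Real.rpow_pos_of_pos two_pos _) (hXcard ▸ hXpos)) (hYcard ▸ hY)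
    rw [Real.log_mul (Real.rpow_pos_of_pos two_pos _).ne' (hXcard ▸ hXpos).ne',
      Real.log_rpow two_pos, hXcard] at h2
    linarith
  -- the biased set
  set B : Finset (Fin m) := univ.filter (fun i => ¬ Unbiased ε Y i) with hBdef
  have hsplit : ∑ i, H i ≤ (∑ i, Real.log (Nat.card (X i))) - B.card * (c/q) := by
    have hstep : ∀ i ∈ univ, H i ≤ Real.log (Nat.card (X i))
        - (if ¬ Unbiased ε Y i then c/q else 0) := by
      intro i _
      by_cases hbi : Unbiased ε Y i
      · simpa [hbi] using hHle i
      · simpa [hbi] using hHbias i hbi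
    calc ∑ i, H i ≤ ∑ i, (Real.log (Nat.card (X i)) - (if ¬ Unbiased ε Y i then c/q else 0)) :=
          Finset.sum_le_sum hstep
      _ = (∑ i, Real.log (Nat.card (X i))) - B.card * (c/q) := by
        rw [Finset.sum_sub_distrib]
        congr 1
        rw [← Finset.sum_filter, Finset.sum_const, nsmul_eq_mul]
  have hsumlog : ∑ i, Real.log (Nat.card (X i)) = Real.log (∏ i, (Nat.card (X i) : ℝ)) :=
    (Real.log_prod (fun i _ => (hnpos i).ne')).symm
  -- identify the set cardinality
  have hBset : (({i : Fin m | ¬ Unbiased ε Y i} : Set (Fin m)).ncard : ℝ) = (B.card : ℝ) := by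
    rw [show ({i | ¬ Unbiased ε Y i} : Set (Fin m)) = ↑B by ext i; simp [hBdef],
      Set.ncard_coe_finset]
  rw [hBset]
  -- final arithmetic
  have hfinal : (B.card : ℝ) * (c/q) ≤ δ * m * Real.log 2 := by
    rw [hsumlog] at hsplit
    linarith
  have hδlog : δ * Real.log 2 = ε * c / (q+1) := by
    rw [hδdef]; field_simp
  have hfinal2 : (B.card : ℝ) * c / q ≤ ε * c * m / (q+1) := by
    have : δ * m * Real.log 2 = (ε * c / (q+1)) * m := by
      rw [← hδlog]; ring
    rw [this] at hfinal
    calc (B.card : ℝ) * c / q = (B.card : ℝ) * (c/q) := by ring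
      _ ≤ ε * c / (q+1) * m := hfinal
      _ = ε * c * m / (q+1) := by ring
  have hq2 : (0:ℝ) < (q:ℝ) + 1 := by positivity
  rw [div_le_div_iff₀ hq0 hq2] at hfinal2
  -- hfinal2 : B.card * c * (q+1) ≤ ε * c * m * q
  have hεm : 0 ≤ ε * c * (m:ℝ) := by positivity
  nlinarith [mul_pos hc hq2, hfinal2, hεm]
end
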